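/- arXiv:2112.03484 — 3 statements merged into one kernel-verified Lean document; each statement's English description precedes it below -/
import Mathlib

section
/- Let n ≥ 2, let M_1, …, M_n be DFAs over a common alphabet Σ, and let G be the labeled graph obtained from the third reduction construction applied to M_1, …, M_n. Then a word u ∈ (Σ ∪ {◁,▷})* is synchronizing for G if and only if there exist v ∈ (Σ ∪ {▷})*, an integer k ≥ 1, and a word w ∈ ⋂_{i=1}^n L(M_i) such that u = v ◁ w ▷^k. -/
/-- A labeled graph over vertex type `V` and alphabet `A`, given by its
labeled-edge relation: `Edge p a q` means there is an edge labeled `a`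
from `p` to `q`. -/
structure LabeledGraph (V A : Type) where
  Edge : V → A → V → Prop

namespace LabeledGraph

variable {V A : Type}

/-- `G.Walk p w q` : there is a (finite) path from `p` to `q` labeled `w`. -/
def Walk (G : LabeledGraph V A) : V → List A → V → Prop
  | p, [], q => p = q
  | p, a :: w, q => ∃ r, G.Edge p a r ∧ Walk G r w q

/-- The follower set of a vertex: labels of finite paths starting at `q`. -/
def follower (G : LabeledGraph V A) (q : V) : Set (List A) :=
  { w | ∃ q', G.Walk q w q' }

/-- The transition action on sets of vertices: `S·w`. -/
def transSet (G : LabeledGraph V A) (S : Set V) (w : List A) : Set V :=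
  { q' | ∃ q ∈ S, G.Walk q w q' }

/-- `G` is deterministic (right-resolving). -/
def Deterministic (G : LabeledGraph V A) : Prop :=
  ∀ p a q q', G.Edge p a q → G.Edge p a q' → q = q'

/-- `G` is essential: every vertex has an outgoing and an incoming edge. -/
def Essential (G : LabeledGraph V A) : Prop :=
  ∀ q, (∃ a r, G.Edge q a r) ∧ (∃ a p, G.Edge p a q)

/-- The sofic shift presented by `G`: labels of bi-infinite paths. -/
def shift (G : LabeledGraph V A) : Set (ℤ → A) :=
  { x | ∃ v : ℤ → V, ∀ j : ℤ, G.Edge (v j) (x j) (v (j + 1)) }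

/-- `w` is a synchronizing word for `G`: `Q_G · w` is a singleton. -/
def SyncWord (G : LabeledGraph V A) (w : List A) : Prop :=
  ∃ r, G.transSet Set.univ w = {r}

/-- A vertex `q` is synchronizing: some word synchronizes to `q`. -/
def SyncVertex (G : LabeledGraph V A) (q : V) : Prop :=
  ∃ w, G.transSet Set.univ w = {q}

/-- `G` is synchronizing: every vertex is synchronizing. -/
def Synchronizing (G : LabeledGraph V A) : Prop :=
  ∀ q, G.SyncVertex q

/-- `G` is follower-separated. -/
def FollowerSeparated (G : LabeledGraph V A) : Prop :=
  ∀ p q, G.follower p = G.follower q → p = q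

/-- `G` is irreducible (strongly connected). -/
def StronglyConnected (G : LabeledGraph V A) : Prop :=
  ∀ p q, ∃ w, G.Walk p w q

/-- `q` is reachable from `p`. -/
def Reachable (G : LabeledGraph V A) (p q : V) : Prop :=
  ∃ w, G.Walk p w q

/-- `C` is an irreducible component: an equivalence class of mutual reachability. -/
def IsIrredComponent (G : LabeledGraph V A) (C : Set V) : Prop :=
  ∃ p, C = { q | G.Reachable p q ∧ G.Reachable q p }

/-- `C` is terminal: everything reachable from `C` lies in `C`. -/
def TerminalSet (G : LabeledGraph V A) (C : Set V) : Prop :=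
  ∀ p ∈ C, ∀ q, G.Reachable p q → q ∈ C

/-- `C` is initial: everything that reaches `C` lies in `C`. -/
def InitialSet (G : LabeledGraph V A) (C : Set V) : Prop :=
  ∀ q ∈ C, ∀ p, G.Reachable p q → p ∈ C

/-- Subgraph induced by a set `P` of vertices. -/
def induce (G : LabeledGraph V A) (P : Set V) : LabeledGraph P A where
  Edge := fun p a q => G.Edge p.1 a q.1

/-- The graph `Ĝ`: vertices are ordered pairs of distinct vertices of `G`,
with an edge labeled `a` from `(p₁,p₂)` to `(q₁,q₂)` iff `G` has edges labeled
`a` from `p₁` to `q₁` and from `p₂` to `q₂`. -/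
def pairGraph (G : LabeledGraph V A) : LabeledGraph { pq : V × V // pq.1 ≠ pq.2 } A where
  Edge := fun x a y => G.Edge x.1.1 a y.1.1 ∧ G.Edge x.1.2 a y.1.2

end LabeledGraph

/-- The word `w` appears in the bi-infinite sequence `x`. -/
def AppearsIn {A : Type} (w : List A) (x : ℤ → A) : Prop :=
  ∃ i : ℤ, ∀ n : Fin w.length, x (i + (n : ℕ)) = w.get n

/-- The language of a subset of the full shift: all finite words appearing
in some point of `X`. -/
def lang {A : Type} (X : Set (ℤ → A)) : Set (List A) :=
  { w | ∃ x ∈ X, AppearsIn w x }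

/-- `X` is a shift space. -/
def IsShiftSpace {A : Type} (X : Set (ℤ → A)) : Prop :=
  ∃ F : Set (List A), X = { x | ∀ w ∈ F, ¬ AppearsIn w x }

/-- `X` is a shift of finite type. -/
def IsSFT {A : Type} (X : Set (ℤ → A)) : Prop :=
  ∃ F : Set (List A), F.Finite ∧ X = { x | ∀ w ∈ F, ¬ AppearsIn w x }

/-- `w` is intrinsically synchronizing for `X`. -/
def IntrinsicallySync {A : Type} (X : Set (ℤ → A)) (w : List A) : Prop :=
  w ∈ lang X ∧ ∀ u v, u ++ w ∈ lang X → w ++ v ∈ lang X → u ++ (w ++ v) ∈ lang X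

/-- `X` is an irreducible shift space. -/
def IrreducibleShift {A : Type} (X : Set (ℤ → A)) : Prop :=
  ∀ u ∈ lang X, ∀ v ∈ lang X, ∃ w, u ++ (w ++ v) ∈ lang X

/-- The follower set of a word `u` in `X`. -/
def followerX {A : Type} (X : Set (ℤ → A)) (u : List A) : Set (List A) :=
  { w | u ++ w ∈ lang X }

/-- `X` is `M`-step: every word of `B(X)` of length at least `M` is
intrinsically synchronizing for `X`. -/
def MStep {A : Type} (X : Set (ℤ → A)) (M : ℕ) : Prop :=
  ∀ w ∈ lang X, M ≤ w.length → IntrinsicallySync X w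

/-- A deterministic finite automaton over state type `Q` and alphabet `A`. -/
structure DFA' (Q A : Type) where
  step : Q → A → Q
  start : Q
  accept : Set Q

/-- Extended transition function. -/
def DFA'.evalFrom {Q A : Type} (M : DFA' Q A) (q : Q) (w : List A) : Q :=
  w.foldl M.step q

/-- The language of a DFA. -/
def DFA'.lang {Q A : Type} (M : DFA' Q A) : Set (List A) :=
  { w | M.evalFrom M.start w ∈ M.accept }

/-- Alphabet `Σ ∪ {◁, ▷}`. -/
inductive Sym3 (A : Type) : Type
  | letter : A → Sym3 A
  | lm : Sym3 A  -- ◁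
  | rm : Sym3 A  -- ▷

/-- Vertices of the third reduction construction: the success state `t`,
the pre-initial states `p_i`, the fail states `r_i`, and the DFA states. -/
inductive V3 {n : ℕ} (Q : Fin n → Type) : Type
  | t : V3 Q
  | pre : Fin n → V3 Q
  | fail : Fin n → V3 Q
  | st : (i : Fin n) → Q i → V3 Q

/-- Edges of the third reduction construction. -/
inductive Red3Edge {n : ℕ} {Q : Fin n → Type} {A : Type} (M : ∀ i, DFA' (Q i) A) :
    V3 Q → Sym3 A → V3 Q → Prop
  /-- self loop labeled `▷` on `t` -/
  | tLoop : Red3Edge M .t .rm .t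
  /-- self loop labeled `▷` on `p_i` -/
  | preRm (i : Fin n) : Red3Edge M (.pre i) .rm (.pre i)
  /-- self loop labeled `a` on `p_i` for each `a ∈ Σ` -/
  | preLetter (i : Fin n) (a : A) : Red3Edge M (.pre i) (.letter a) (.pre i)
  /-- self loop labeled `▷` on `r_i` -/
  | failRm (i : Fin n) : Red3Edge M (.fail i) .rm (.fail i)
  /-- the embedded DFA transitions -/
  | dfaStep (i : Fin n) (q : Q i) (a : A) :
      Red3Edge M (.st i q) (.letter a) (.st i ((M i).step q a))
  /-- edge labeled `◁` from `p_i` to `s_i` -/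
  | enter (i : Fin n) : Red3Edge M (.pre i) .lm (.st i ((M i).start))
  /-- edge labeled `▷` from each accepting state of `M_i` to `t` -/
  | acc (i : Fin n) (q : Q i) : q ∈ (M i).accept → Red3Edge M (.st i q) .rm .t
  /-- edge labeled `▷` from each nonaccepting state of `M_i` to `r_i` -/
  | rej (i : Fin n) (q : Q i) : q ∉ (M i).accept → Red3Edge M (.st i q) .rm (.fail i)

/-- The labeled graph `G` of the third reduction construction. -/
def Red3 {n : ℕ} {Q : Fin n → Type} {A : Type} (M : ∀ i, DFA' (Q i) A) :
    LabeledGraph (V3 Q) (Sym3 A) where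
  Edge := Red3Edge M


section Aux3

lemma walk_append' {V A : Type} (G : LabeledGraph V A) (u : List A) :
    ∀ (v : List A) (p q : V), G.Walk p (u ++ v) q ↔ ∃ m, G.Walk p u m ∧ G.Walk m v q := by
  induction u with
  | nil => intro v p q; simp [LabeledGraph.Walk]
  | cons a u ih =>
      intro v p q
      constructor
      · intro h
        obtain ⟨r, he, hw⟩ := h
        obtain ⟨m, h1, h2⟩ := (ih v r q).mp hw
        exact ⟨m, ⟨r, he, h1⟩, h2⟩
      · rintro ⟨m, ⟨r, he, h1⟩, h2⟩
        exact ⟨r, he, (ih v r q).mpr ⟨m, h1, h2⟩⟩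

lemma mem_split_first' {α : Type} (a : α) :
    ∀ (l : List α), a ∈ l → ∃ s t, l = s ++ a :: t ∧ a ∉ s := by
  intro l
  induction l with
  | nil => simp
  | cons b l ih =>
      intro h
      by_cases hb : b = a
      · exact ⟨[], l, by rw [hb]; rfl, by simp⟩
      · obtain ⟨s, t, rfl, hs⟩ := ih (by
          rcases List.mem_cons.mp h with h' | h'
          · exact absurd h'.symm hb
          · exact h')
        exact ⟨b :: s, t, rfl, by
          simp only [List.mem_cons, not_or]
          exact ⟨fun h' => hb h'.symm, hs⟩⟩

variable {n : ℕ} {Q : Fin n → Type} {A : Type} (M : ∀ i, DFA' (Q i) A)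

lemma red3_pre_loop (i : Fin n) :
    ∀ v : List (Sym3 A), (∀ c ∈ v, c ≠ Sym3.lm) → (Red3 M).Walk (.pre i) v (.pre i) := by
  intro v
  induction v with
  | nil => intro _; rfl
  | cons c v ih =>
      intro h
      have hc : c ≠ Sym3.lm := h c List.mem_cons_self
      have ih' := ih (fun d hd => h d (List.mem_cons_of_mem _ hd))
      cases c with
      | letter a => exact ⟨_, Red3Edge.preLetter i a, ih'⟩
      | lm => exact absurd rfl hc
      | rm => exact ⟨_, Red3Edge.preRm i, ih'⟩

lemma red3_pre_nolm (i : Fin n) :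
    ∀ (v : List (Sym3 A)) (x : V3 Q), (Red3 M).Walk (.pre i) v x →
      (∀ c ∈ v, c ≠ Sym3.lm) → x = .pre i := by
  intro v
  induction v with
  | nil => intro x h _; exact h.symm
  | cons c v ih =>
      intro x h hc
      obtain ⟨r, he, hw⟩ := h
      cases he with
      | preRm => exact ih x hw (fun d hd => hc d (List.mem_cons_of_mem _ hd))
      | preLetter => exact ih x hw (fun d hd => hc d (List.mem_cons_of_mem _ hd))
      | enter => exact absurd rfl (hc Sym3.lm List.mem_cons_self)

lemma red3_st_letters (i : Fin n) :
    ∀ (w : List A) (q : Q i),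
      (Red3 M).Walk (.st i q) (w.map Sym3.letter) (.st i ((M i).evalFrom q w)) := by
  intro w
  induction w with
  | nil => intro q; rfl
  | cons a w ih => intro q; exact ⟨_, Red3Edge.dfaStep i q a, ih ((M i).step q a)⟩

lemma red3_st_letters_det (i : Fin n) :
    ∀ (w : List A) (q : Q i) (x : V3 Q),
      (Red3 M).Walk (.st i q) (w.map Sym3.letter) x → x = .st i ((M i).evalFrom q w) := by
  intro w
  induction w with
  | nil => intro q x h; exact h.symm
  | cons a w ih =>
      intro q x h
      obtain ⟨r, he, hw⟩ := h
      cases he with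
      | dfaStep => exact ih ((M i).step q a) x hw

lemma red3_t_loop : ∀ m : ℕ, (Red3 M).Walk .t (List.replicate m Sym3.rm) .t := by
  intro m
  induction m with
  | zero => rfl
  | succ m ih => exact ⟨_, Red3Edge.tLoop, ih⟩

lemma red3_fail_loop (i : Fin n) :
    ∀ m : ℕ, (Red3 M).Walk (.fail i) (List.replicate m Sym3.rm) (.fail i) := by
  intro m
  induction m with
  | zero => rfl
  | succ m ih => exact ⟨_, Red3Edge.failRm i, ih⟩

lemma red3_t_walk :
    ∀ (z : List (Sym3 A)) (x : V3 Q), (Red3 M).Walk .t z x →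
      z = List.replicate z.length Sym3.rm ∧ x = .t := by
  intro z
  induction z with
  | nil => intro x h; exact ⟨rfl, h.symm⟩
  | cons c z ih =>
      intro x h
      obtain ⟨r, he, hw⟩ := h
      cases he with
      | tLoop =>
          obtain ⟨h1, h2⟩ := ih x hw
          refine ⟨?_, h2⟩
          simp only [List.length_cons, List.replicate_succ]
          rw [← h1]

lemma red3_fail_walk (i : Fin n) :
    ∀ (z : List (Sym3 A)) (x : V3 Q), (Red3 M).Walk (.fail i) z x →
      z = List.replicate z.length Sym3.rm ∧ x = .fail i := by
  intro z
  induction z with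
  | nil => intro x h; exact ⟨rfl, h.symm⟩
  | cons c z ih =>
      intro x h
      obtain ⟨r, he, hw⟩ := h
      cases he with
      | failRm =>
          obtain ⟨h1, h2⟩ := ih x hw
          refine ⟨?_, h2⟩
          simp only [List.length_cons, List.replicate_succ]
          rw [← h1]

lemma red3_no_lm :
    ∀ (u : List (Sym3 A)) (q x : V3 Q), (Red3 M).Walk q u x →
      (∀ i, q ≠ V3.pre i) → Sym3.lm ∉ u := by
  intro u
  induction u with
  | nil => intro q x _ _; simp
  | cons c u ih =>
      intro q x h hq
      obtain ⟨r, he, hw⟩ := h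
      simp only [List.mem_cons, not_or]
      cases he with
      | tLoop => exact ⟨by simp, ih _ _ hw (fun i h => nomatch h)⟩
      | preRm i => exact absurd rfl (hq i)
      | preLetter i a => exact absurd rfl (hq i)
      | failRm i => exact ⟨by simp, ih _ _ hw (fun j h => nomatch h)⟩
      | dfaStep i q' a => exact ⟨by simp, ih _ _ hw (fun j h => nomatch h)⟩
      | enter i => exact absurd rfl (hq i)
      | acc i q' hacc => exact ⟨by simp, ih _ _ hw (fun j h => nomatch h)⟩
      | rej i q' hrej => exact ⟨by simp, ih _ _ hw (fun j h => nomatch h)⟩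

lemma red3_st_run (i : Fin n) :
    ∀ (z : List (Sym3 A)) (q : Q i) (x : V3 Q), (Red3 M).Walk (.st i q) z x →
      ∃ (w : List A) (k : ℕ),
        z = w.map Sym3.letter ++ List.replicate k Sym3.rm ∧
        (k = 0 → x = .st i ((M i).evalFrom q w)) ∧
        (1 ≤ k →
          ((M i).evalFrom q w ∈ (M i).accept ∧ x = .t) ∨
          ((M i).evalFrom q w ∉ (M i).accept ∧ x = .fail i)) := by
  intro z
  induction z with
  | nil =>
      intro q x h
      exact ⟨[], 0, rfl, fun _ => h.symm, fun hk => absurd hk (by omega)⟩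
  | cons c z ih =>
      intro q x h
      obtain ⟨r, he, hw⟩ := h
      cases he with
      | dfaStep =>
          rename_i a
          obtain ⟨w, k, hz, h0, h1⟩ := ih ((M i).step q a) x hw
          exact ⟨a :: w, k, by rw [hz]; rfl, h0, h1⟩
      | acc _ _ hacc =>
          obtain ⟨h1, h2⟩ := red3_t_walk M z x hw
          refine ⟨[], z.length + 1, ?_, by omega, fun _ => Or.inl ⟨hacc, h2⟩⟩
          simp only [List.map_nil, List.nil_append, List.replicate_succ]
          rw [← h1]
      | rej _ _ hrej =>
          obtain ⟨h1, h2⟩ := red3_fail_walk M i z x hw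
          refine ⟨[], z.length + 1, ?_, by omega, fun _ => Or.inr ⟨hrej, h2⟩⟩
          simp only [List.map_nil, List.nil_append, List.replicate_succ]
          rw [← h1]

lemma red3_pre_full (i : Fin n) (v : List (Sym3 A)) (w : List A) (k : ℕ)
    (hv : ∀ c ∈ v, c ≠ Sym3.lm) (hk : 1 ≤ k) :
    ∃ x : V3 Q,
      (Red3 M).Walk (.pre i)
        (v ++ Sym3.lm :: (w.map Sym3.letter ++ List.replicate k Sym3.rm)) x ∧
      (((M i).evalFrom (M i).start w ∈ (M i).accept ∧ x = .t) ∨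
       ((M i).evalFrom (M i).start w ∉ (M i).accept ∧ x = .fail i)) := by
  obtain ⟨k', rfl⟩ : ∃ k', k = k' + 1 := ⟨k - 1, by omega⟩
  by_cases hacc : (M i).evalFrom (M i).start w ∈ (M i).accept
  · refine ⟨.t, ?_, Or.inl ⟨hacc, rfl⟩⟩
    rw [walk_append' (Red3 M)]
    refine ⟨.pre i, red3_pre_loop M i v hv, ⟨_, Red3Edge.enter i, ?_⟩⟩
    rw [walk_append' (Red3 M)]
    refine ⟨_, red3_st_letters M i w (M i).start, ?_⟩
    rw [List.replicate_succ]
    exact ⟨.t, Red3Edge.acc i _ hacc, red3_t_loop M k'⟩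
  · refine ⟨.fail i, ?_, Or.inr ⟨hacc, rfl⟩⟩
    rw [walk_append' (Red3 M)]
    refine ⟨.pre i, red3_pre_loop M i v hv, ⟨_, Red3Edge.enter i, ?_⟩⟩
    rw [walk_append' (Red3 M)]
    refine ⟨_, red3_st_letters M i w (M i).start, ?_⟩
    rw [List.replicate_succ]
    exact ⟨.fail i, Red3Edge.rej i _ hacc, red3_fail_loop M i k'⟩

end Aux3
/-- Let `n ≥ 2`, let `M_1, …, M_n` be DFAs over a common alphabet `Σ`, and let
`G` be the graph of the third reduction construction. Then a word
`u ∈ (Σ ∪ {◁,▷})*` is synchronizing for `G` iff there exist `v ∈ (Σ ∪ {▷})*`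
(i.e. `v` avoids `◁`), an integer `k ≥ 1`, and `w ∈ ⋂ᵢ L(Mᵢ)` with
`u = v ◁ w ▷^k`. -/
theorem stmt16 {n : ℕ} {Q : Fin n → Type} {A : Type}
    [Fintype A] [∀ i, Fintype (Q i)] (hn : 2 ≤ n)
    (M : ∀ i, DFA' (Q i) A) (u : List (Sym3 A)) :
    (Red3 M).SyncWord u ↔
      ∃ (v : List (Sym3 A)) (k : ℕ) (w : List A),
        (∀ c ∈ v, c ≠ Sym3.lm) ∧ 1 ≤ k ∧ (∀ i, w ∈ (M i).lang) ∧
        u = v ++ Sym3.lm :: (w.map Sym3.letter ++ List.replicate k Sym3.rm) := by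
  constructor
  · rintro ⟨r, hr⟩
    have hmem : ∀ q x : V3 Q, (Red3 M).Walk q u x → x = r := by
      intro q x h
      have hx : x ∈ (Red3 M).transSet Set.univ u := ⟨q, Set.mem_univ q, h⟩
      rw [hr] at hx
      exact hx
    have hex : ∃ q, (Red3 M).Walk q u r := by
      have hrm : r ∈ (Red3 M).transSet Set.univ u := by rw [hr]; rfl
      obtain ⟨q, -, h⟩ := hrm
      exact ⟨q, h⟩
    set i0 : Fin n := ⟨0, by omega⟩ with hi0
    set i1 : Fin n := ⟨1, by omega⟩ with hi1
    have hne01 : i0 ≠ i1 := by simp [hi0, hi1, Fin.ext_iff]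
    have hlm : Sym3.lm ∈ u := by
      by_contra hlm
      have hvv : ∀ c ∈ u, c ≠ Sym3.lm := fun c hc hce => hlm (hce ▸ hc)
      have h0 := hmem _ _ (red3_pre_loop M i0 u hvv)
      have h1 := hmem _ _ (red3_pre_loop M i1 u hvv)
      rw [← h1] at h0
      injection h0 with h0'
      exact hne01 h0'
    obtain ⟨v, z, rfl, hvnot⟩ := mem_split_first' Sym3.lm u hlm
    have hv : ∀ c ∈ v, c ≠ Sym3.lm := fun c hc hce => hvnot (hce ▸ hc)
    obtain ⟨q, hq⟩ := hex
    have hqpre : ∃ i, q = V3.pre i := by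
      by_contra h
      push_neg at h
      exact red3_no_lm M _ q r hq h (by simp)
    obtain ⟨i, rfl⟩ := hqpre
    rw [walk_append' (Red3 M)] at hq
    obtain ⟨m, hq1, hq2⟩ := hq
    have hm : m = V3.pre i := red3_pre_nolm M i v m hq1 hv
    subst hm
    obtain ⟨r', he, hz⟩ := hq2
    cases he with
    | enter =>
      obtain ⟨w, k, hzeq, h0, h1⟩ := red3_st_run M i z (M i).start r hz
      have hk : 1 ≤ k := by
        rcases Nat.eq_zero_or_pos k with hk0 | hk0
        · exfalso
          obtain ⟨j, hji⟩ : ∃ j : Fin n, j ≠ i := by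
            rcases eq_or_ne i i0 with h | h
            · exact ⟨i1, by rw [h]; exact fun hh => hne01 hh.symm⟩
            · exact ⟨i0, Ne.symm h⟩
          have hr1 : r = V3.st i ((M i).evalFrom (M i).start w) := h0 hk0
          have hwalkj : (Red3 M).Walk (.pre j) (v ++ Sym3.lm :: z)
              (.st j ((M j).evalFrom (M j).start w)) := by
            rw [walk_append' (Red3 M)]
            refine ⟨.pre j, red3_pre_loop M j v hv, ⟨_, Red3Edge.enter j, ?_⟩⟩
            rw [hzeq, hk0]
            simpa using red3_st_letters M j w (M j).start
          have hjr := hmem _ _ hwalkj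
          rw [hr1] at hjr
          injection hjr with hj1 hj2
          exact hji hj1
        · exact hk0
      have hall : ∀ j, (M j).evalFrom (M j).start w ∈ (M j).accept := by
        by_contra hj
        push_neg at hj
        obtain ⟨j, hj⟩ := hj
        obtain ⟨x, hwx, hdx⟩ := red3_pre_full M j v w k hv hk
        rw [← hzeq] at hwx
        have hxr := hmem _ _ hwx
        have hrfail : r = V3.fail j := by
          rcases hdx with ⟨ha, hx⟩ | ⟨ha, hx⟩
          · exact absurd ha hj
          · rw [← hxr]; exact hx
        obtain ⟨j', hj'⟩ : ∃ j' : Fin n, j' ≠ j := by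
          rcases eq_or_ne j i0 with h | h
          · exact ⟨i1, by rw [h]; exact fun hh => hne01 hh.symm⟩
          · exact ⟨i0, Ne.symm h⟩
        obtain ⟨x', hwx', hdx'⟩ := red3_pre_full M j' v w k hv hk
        rw [← hzeq] at hwx'
        have hxr' := hmem _ _ hwx'
        rcases hdx' with ⟨ha', hx'⟩ | ⟨ha', hx'⟩
        · rw [hx', hrfail] at hxr'
          exact nomatch hxr'
        · rw [hx', hrfail] at hxr'
          injection hxr' with h'
          exact hj' h'
      exact ⟨v, k, w, hv, hk, fun i => hall i, by rw [hzeq]⟩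
  · rintro ⟨v, k, w, hv, hk, hw, rfl⟩
    refine ⟨.t, Set.eq_singleton_iff_unique_mem.mpr ⟨?_, ?_⟩⟩
    · obtain ⟨x, hwx, hdx⟩ := red3_pre_full M ⟨0, by omega⟩ v w k hv hk
      rcases hdx with ⟨ha, rfl⟩ | ⟨hna, hx⟩
      · exact ⟨_, Set.mem_univ _, hwx⟩
      · exact absurd (hw _) hna
    · rintro x ⟨q, -, hq⟩
      have hqpre : ∃ i, q = V3.pre i := by
        by_contra h
        push_neg at h
        exact red3_no_lm M _ q x hq h (by simp)
      obtain ⟨i, rfl⟩ := hqpre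
      rw [walk_append' (Red3 M)] at hq
      obtain ⟨m, h1, h2⟩ := hq
      have hm : m = V3.pre i := red3_pre_nolm M i v m h1 hv
      subst hm
      obtain ⟨r', he, hz⟩ := h2
      cases he with
      | enter =>
        rw [walk_append' (Red3 M)] at hz
        obtain ⟨m', hz1, hz2⟩ := hz
        have hm' : m' = V3.st i ((M i).evalFrom (M i).start w) :=
          red3_st_letters_det M i w (M i).start m' hz1
        subst hm'
        obtain ⟨k', rfl⟩ : ∃ k', k = k' + 1 := ⟨k - 1, by omega⟩
        rw [List.replicate_succ] at hz2
        obtain ⟨r'', he2, hz3⟩ := hz2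
        cases he2 with
        | acc _ _ hacc => exact (red3_t_walk M _ x hz3).2
        | rej _ _ hrej => exact absurd (hw i) hrej
end

section
/- Let G be a deterministic presentation over a finite alphabet Σ with n vertices. Then ⟨G⟩ is a shift of finite type if and only if ⟨G⟩ is 2^{2n}-step. -/
namespace Stmt18Aux
open LabeledGraph

variable {V A : Type}

theorem walk_append {G : LabeledGraph V A} {u v : List A} {p q : V} :
    G.Walk p (u ++ v) q ↔ ∃ r, G.Walk p u r ∧ G.Walk r v q := by
  induction u generalizing p with
  | nil =>
    simp only [List.nil_append, Walk]
    constructor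
    · intro h; exact ⟨p, rfl, h⟩
    · rintro ⟨r, rfl, h⟩; exact h
  | cons a u ih =>
    constructor
    · rintro ⟨r, he, hw⟩
      obtain ⟨s, h1, h2⟩ := ih.mp hw
      exact ⟨s, ⟨r, he, h1⟩, h2⟩
    · rintro ⟨s, ⟨r, he, h1⟩, h2⟩
      exact ⟨r, he, ih.mpr ⟨s, h1, h2⟩⟩

theorem transSet_append (G : LabeledGraph V A) (S : Set V) (u v : List A) :
    G.transSet S (u ++ v) = G.transSet (G.transSet S u) v := by
  ext q'
  simp only [transSet, Set.mem_setOf_eq, walk_append]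
  tauto

def zseg (x : ℤ → A) (i : ℤ) (L : ℕ) : List A := List.ofFn fun t : Fin L => x (i + t)

@[simp] theorem zseg_length (x : ℤ → A) (i : ℤ) (L : ℕ) : (zseg x i L).length = L := by
  simp [zseg]

theorem zseg_get (x : ℤ → A) (i : ℤ) (L : ℕ) (t : ℕ) (h : t < (zseg x i L).length) :
    (zseg x i L).get ⟨t, h⟩ = x (i + t) := by
  simp [zseg]

theorem zseg_append (x : ℤ → A) (i : ℤ) (a b : ℕ) :
    zseg x i (a + b) = zseg x i a ++ zseg x (i + a) b := by
  apply List.ext_get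
  · simp
  · intro t h1 h2
    simp only [zseg_length] at h1
    rw [zseg_get]
    rcases lt_or_ge t a with ht | ht
    · rw [List.get_eq_getElem, List.getElem_append_left (by simpa using ht)]
      simp [zseg]
    · rw [List.get_eq_getElem, List.getElem_append_right (by simpa using ht)]
      · simp only [zseg, List.getElem_ofFn, List.length_ofFn, Fin.val_mk]
        congr 1
        push_cast [Nat.sub_add_cancel]
        omega

theorem zseg_one (x : ℤ → A) (i : ℤ) : zseg x i 1 = [x i] := by
  simp [zseg]

theorem appears_iff {w : List A} {x : ℤ → A} :
    AppearsIn w x ↔ ∃ i, zseg x i w.length = w := by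
  constructor
  · rintro ⟨i, h⟩
    refine ⟨i, List.ext_get (by simp) ?_⟩
    intro t h1 h2
    rw [zseg_get]
    exact h ⟨t, h2⟩
  · rintro ⟨i, h⟩
    obtain ⟨hlen, hget⟩ := List.ext_get_iff.mp h
    refine ⟨i, fun n => ?_⟩
    have := hget n.1 (by simp) n.2
    rw [zseg_get] at this
    simpa using this

theorem walk_vertexSeq {G : LabeledGraph V A} {p q : V} {w : List A} (h : G.Walk p w q) :
    ∃ u : ℕ → V, u 0 = p ∧ u w.length = q ∧
      ∀ (t : ℕ) (ht : t < w.length), G.Edge (u t) (w.get ⟨t, ht⟩) (u (t + 1)) := by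
  induction w generalizing p with
  | nil =>
    exact ⟨fun _ => p, rfl, h.symm ▸ rfl, fun t ht => absurd ht (by simp)⟩
  | cons a w ih =>
    obtain ⟨r, he, hw⟩ := h
    obtain ⟨u, hu0, huL, hedge⟩ := ih hw
    refine ⟨fun t => if t = 0 then p else u (t - 1), by simp, by simp [huL], ?_⟩
    intro t ht
    cases t with
    | zero => simpa [hu0] using he
    | succ s =>
      simpa using hedge s (by simpa using ht)

theorem walk_zseg {G : LabeledGraph V A} {x : ℤ → A} {v : ℤ → V}
    (hv : ∀ j : ℤ, G.Edge (v j) (x j) (v (j + 1))) :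
    ∀ (L : ℕ) (i : ℤ), G.Walk (v i) (zseg x i L) (v (i + L)) := by
  intro L
  induction L with
  | zero =>
    intro i
    have h0 : zseg x i 0 = [] := by simp [zseg]
    rw [h0, show i + ((0:ℕ):ℤ) = i by simp]
    rfl
  | succ L ihL =>
    intro i
    have : zseg x i (L + 1) = x i :: zseg x (i + 1) L := by
      apply List.ext_get (by simp)
      intro t h1 h2
      simp only [zseg_length] at h1
      cases t with
      | zero => simp [zseg_get, zseg]
      | succ s =>
        rw [zseg_get]
        simp only [List.get_cons_succ]
        rw [zseg_get]
        congr 1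
        push_cast
        ring
    rw [this]
    refine ⟨v (i + 1), hv i, ?_⟩
    rw [show i + (↑(L + 1) : ℤ) = (i + 1) + L by push_cast; ring]
    exact ihL (i + 1)

/-- Every walk extends to a bi-infinite point of the shift (given essentiality). -/
theorem walk_extend {G : LabeledGraph V A} (hess : G.Essential) {p q : V} {w : List A}
    (h : G.Walk p w q) : ∃ x ∈ G.shift, AppearsIn w x := by
  classical
  have hA : ∀ s : V, ∃ ar : A × V, G.Edge s ar.1 ar.2 := by
    intro s; obtain ⟨a, r, hr⟩ := (hess s).1; exact ⟨(a, r), hr⟩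
  have hB : ∀ s : V, ∃ ap : A × V, G.Edge ap.2 ap.1 s := by
    intro s; obtain ⟨a, r, hr⟩ := (hess s).2; exact ⟨(a, r), hr⟩
  choose nxt hnxt using hA
  choose prv hprv using hB
  obtain ⟨u, hu0, huL, hedge⟩ := walk_vertexSeq h
  let fv : ℕ → V := fun n => Nat.rec q (fun _ s => (nxt s).2) n
  let fl : ℕ → A := fun n => (nxt (fv n)).1
  have hf : ∀ n, G.Edge (fv n) (fl n) (fv (n + 1)) := fun n => hnxt (fv n)
  let bv : ℕ → V := fun n => Nat.rec p (fun _ s => (prv s).2) n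
  let bl : ℕ → A := fun n => (prv (bv n)).1
  have hb : ∀ n, G.Edge (bv (n + 1)) (bl n) (bv n) := fun n => hprv (bv n)
  let v : ℤ → V := fun j => if j < 0 then bv (-j).toNat
    else if j ≤ (w.length : ℤ) then u j.toNat else fv (j - w.length).toNat
  let x : ℤ → A := fun j =>
    if j < 0 then bl (-j - 1).toNat
    else if hj : 0 ≤ j ∧ j < (w.length : ℤ) then w.get ⟨j.toNat, by omega⟩
    else fl (j - w.length).toNat
  have hbv0 : bv 0 = p := rfl
  have hfv0 : fv 0 = q := rfl
  have hvx : ∀ j : ℤ, G.Edge (v j) (x j) (v (j + 1)) := by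
    intro j
    rcases lt_or_ge j 0 with hj | hj
    · have hx : x j = bl (-j - 1).toNat := by simp only [x]; rw [if_pos hj]
      have hvj : v j = bv ((-j - 1).toNat + 1) := by
        simp only [v]; rw [if_pos hj]
        rw [show (-j).toNat = (-j - 1).toNat + 1 by omega]
      have hvj1 : v (j + 1) = bv (-j - 1).toNat := by
        rcases lt_or_ge (j + 1) 0 with h1 | h1
        · simp only [v]; rw [if_pos h1]
          rw [show (-(j+1)).toNat = (-j - 1).toNat by omega]
        · have hj1 : j + 1 = 0 := by omega
          simp only [v]
          rw [if_neg (by omega), if_pos (by omega), show (-j - 1).toNat = 0 by omega,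
            show (j+1).toNat = 0 by omega, hu0, hbv0]
      rw [hx, hvj, hvj1]; exact hb _
    · rcases lt_or_ge j (w.length : ℤ) with hjL | hjL
      · have hx : x j = w.get ⟨j.toNat, by omega⟩ := by
          simp only [x]; rw [if_neg (by omega), dif_pos ⟨hj, hjL⟩]
        have hvj : v j = u j.toNat := by
          simp only [v]; rw [if_neg (by omega), if_pos (by omega)]
        have hvj1 : v (j + 1) = u (j.toNat + 1) := by
          simp only [v]; rw [if_neg (by omega), if_pos (by omega),
            show (j + 1).toNat = j.toNat + 1 by omega]
        rw [hx, hvj, hvj1]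
        exact hedge j.toNat (by omega)
      · have hx : x j = fl (j - w.length).toNat := by
          simp only [x]; rw [if_neg (by omega), dif_neg (by omega)]
        have hvj : v j = fv (j - w.length).toNat := by
          rcases eq_or_lt_of_le hjL with hEq | hlt
          · simp only [v]; rw [if_neg (by omega), if_pos (by omega),
              show j.toNat = w.length by omega, huL,
              show (j - w.length).toNat = 0 by omega, hfv0]
          · simp only [v]; rw [if_neg (by omega), if_neg (by omega)]
        have hvj1 : v (j + 1) = fv ((j - w.length).toNat + 1) := by
          simp only [v]; rw [if_neg (by omega), if_neg (by omega),
            show (j + 1 - w.length).toNat = (j - w.length).toNat + 1 by omega]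
        rw [hx, hvj, hvj1]; exact hf _
  refine ⟨x, ⟨v, hvx⟩, 0, fun n => ?_⟩
  rw [show (0 : ℤ) + (n : ℕ) = ((n : ℕ) : ℤ) by ring]
  have h1 : (0 : ℤ) ≤ (n : ℤ) ∧ ((n : ℕ) : ℤ) < (w.length : ℤ) := ⟨by omega, by exact_mod_cast n.2⟩
  simp only [x]
  rw [if_neg (by omega), dif_pos h1]
  exact congrArg w.get (by ext; simp)

theorem mem_lang_shift {G : LabeledGraph V A} (hess : G.Essential) {w : List A} :
    w ∈ lang G.shift ↔ ∃ p q, G.Walk p w q := by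
  constructor
  · rintro ⟨x, ⟨v, hv⟩, happ⟩
    obtain ⟨i, hseg⟩ := appears_iff.mp happ
    have hwk := walk_zseg hv w.length i
    rw [hseg] at hwk
    exact ⟨v i, v (i + w.length), hwk⟩
  · rintro ⟨p, q, hw⟩
    obtain ⟨x, hx, happ⟩ := walk_extend hess hw
    exact ⟨x, hx, happ⟩

theorem lang_iff_trans {G : LabeledGraph V A} (hess : G.Essential) {w : List A} :
    w ∈ lang G.shift ↔ (G.transSet Set.univ w).Nonempty := by
  rw [mem_lang_shift hess]
  constructor
  · rintro ⟨p, q, hw⟩; exact ⟨q, p, Set.mem_univ p, hw⟩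
  · rintro ⟨q, p, _, hw⟩; exact ⟨p, q, hw⟩

/-- Repeat β k times, then γ. -/
def rep (β γ : List A) : ℕ → List A
  | 0 => γ
  | k + 1 => β ++ rep β γ k

theorem rep_len_ge (β γ : List A) (hβ : 1 ≤ β.length) (k : ℕ) : k ≤ (rep β γ k).length := by
  induction k with
  | zero => simp
  | succ k ih => simp only [rep, List.length_append]; omega

theorem transSet_rep {G : LabeledGraph V A} {β γ : List A} {S : Set V}
    (hfix : G.transSet S β = S) (k : ℕ) :
    G.transSet S (rep β γ k) = G.transSet S γ := by
  induction k with
  | zero => rfl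
  | succ k ih => rw [rep, transSet_append, hfix, ih]

/-- The pumping argument: if the shift is M-step for some M, then every word of
length at least `2 ^ (2 * card V)` is intrinsically synchronizing. -/
theorem pump {G : LabeledGraph V A} [Fintype V] (hess : G.Essential)
    (M : ℕ) (hM : MStep G.shift M) :
    MStep G.shift (2 ^ (2 * Fintype.card V)) := by
  classical
  intro w hw hlen
  refine ⟨hw, fun u v huw hwv => ?_⟩
  set D := G.transSet Set.univ u with hD
  -- pigeonhole on pairs of subsets along prefixes of w
  let f : Fin (w.length + 1) → Set V × Set V :=
    fun i => (G.transSet Set.univ (w.take i), G.transSet D (w.take i))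
  have hcard : Fintype.card (Set V × Set V) < Fintype.card (Fin (w.length + 1)) := by
    simp only [Fintype.card_prod, Fintype.card_set, Fintype.card_fin]
    calc 2 ^ Fintype.card V * 2 ^ Fintype.card V = 2 ^ (2 * Fintype.card V) := by
          rw [← pow_add]; ring_nf
      _ < w.length + 1 := by omega
  obtain ⟨i', j', hne, hfe⟩ := Fintype.exists_ne_map_eq_of_card_lt f hcard
  -- wlog i < j
  have key : ∀ i j : Fin (w.length + 1), (i : ℕ) < (j : ℕ) → f i = f j →
      u ++ (w ++ v) ∈ lang G.shift := by
    intro i j hij hfeq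
    set α : List A := w.take i with hα
    set β : List A := (w.take j).drop i with hβ
    set γ : List A := w.drop j with hγ
    have hαβ : α ++ β = w.take j := by
      rw [hα, hβ]
      have htt : w.take (i:ℕ) = (w.take (j:ℕ)).take (i:ℕ) := by
        rw [List.take_take, min_eq_left (by omega)]
      rw [htt, List.take_append_drop]
    have hwdec : (α ++ β) ++ γ = w := by rw [hαβ, hγ]; exact List.take_append_drop _ _
    have hβlen : 1 ≤ β.length := by
      rw [hβ, List.length_drop, List.length_take]
      have := j.2
      omega
    have hS : G.transSet Set.univ (α ++ β) = G.transSet Set.univ α := by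
      rw [hαβ, hα]
      exact (congrArg Prod.fst hfeq).symm
    have hT : G.transSet D (α ++ β) = G.transSet D α := by
      rw [hαβ, hα]
      exact (congrArg Prod.snd hfeq).symm
    have hfixS : G.transSet (G.transSet Set.univ α) β = G.transSet Set.univ α := by
      rw [← transSet_append, hS]
    have hfixT : G.transSet (G.transSet D α) β = G.transSet D α := by
      rw [← transSet_append, hT]
    set w' : List A := α ++ rep β γ M with hw'
    -- transition sets of w' agree with those of w
    have hSw' : G.transSet Set.univ w' = G.transSet Set.univ w := by
      rw [hw', transSet_append, transSet_rep hfixS, ← hwdec, transSet_append, hS]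
    have hTw' : G.transSet D w' = G.transSet D w := by
      rw [hw', transSet_append, transSet_rep hfixT, ← hwdec, transSet_append, hT]
    have hlen' : M ≤ w'.length := by
      rw [hw', List.length_append]
      have := rep_len_ge β γ hβlen M
      omega
    have hw'lang : w' ∈ lang G.shift := by
      rw [lang_iff_trans hess, hSw', ← lang_iff_trans hess]; exact hw
    have huw' : u ++ w' ∈ lang G.shift := by
      rw [lang_iff_trans hess, transSet_append, ← hD, hTw', ← transSet_append,
        ← lang_iff_trans hess]
      exact huw
    have hwv' : w' ++ v ∈ lang G.shift := by
      rw [lang_iff_trans hess, transSet_append, hSw', ← transSet_append,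
        ← lang_iff_trans hess]
      exact hwv
    have hsync := (hM w' hw'lang hlen').2 u v huw' hwv'
    rw [lang_iff_trans hess] at hsync ⊢
    rw [← List.append_assoc] at hsync ⊢
    rw [transSet_append, transSet_append] at hsync
    rw [transSet_append, transSet_append, ← hD, ← hTw']
    exact hsync
  rcases Ne.lt_or_gt hne with hlt | hlt
  · exact key i' j' hlt hfe
  · exact key j' i' hlt hfe.symm

theorem zseg_get_of_eq {x : ℤ → A} {i : ℤ} {w : List A} (h : zseg x i w.length = w) :
    ∀ (t : ℕ) (ht : t < w.length), x (i + t) = w.get ⟨t, ht⟩ := by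
  intro t ht
  obtain ⟨hlen, hget⟩ := List.ext_get_iff.mp h
  have := hget t (by simp [ht]) ht
  rw [zseg_get] at this
  exact this

theorem zseg_eq_of {x y : ℤ → A} {i i' : ℤ} {L : ℕ}
    (h : ∀ t : ℕ, t < L → x (i + t) = y (i' + t)) : zseg x i L = zseg y i' L := by
  apply List.ext_get (by simp)
  intro t h1 h2
  rw [zseg_get, zseg_get]
  exact h t (by simpa using h1)

/-- An SFT is M-step for some M (splicing two points along a long common word). -/
theorem exists_mstep_of_sft {X : Set (ℤ → A)} (h : IsSFT X) : ∃ M, MStep X M := by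
  classical
  obtain ⟨F, hFfin, hX⟩ := h
  set M := hFfin.toFinset.sup List.length with hM
  have hMF : ∀ f ∈ F, f.length ≤ M := fun f hf =>
    Finset.le_sup (hFfin.mem_toFinset.mpr hf)
  refine ⟨M, ?_⟩
  intro w hw hlen
  refine ⟨hw, fun u v huw hwv => ?_⟩
  obtain ⟨x, hxX, hax⟩ := huw
  obtain ⟨i, hsegx⟩ := appears_iff.mp hax
  obtain ⟨y, hyX, hay⟩ := hwv
  obtain ⟨i', hsegy⟩ := appears_iff.mp hay
  rw [List.length_append] at hsegx hsegy
  have hxw : zseg x (i + u.length) w.length = w := by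
    have := zseg_append x i u.length w.length
    rw [hsegx] at this
    exact (List.append_inj this.symm (by simp)).2
  have hyw : zseg y i' w.length = w := by
    have := zseg_append y i' w.length v.length
    rw [hsegy] at this
    exact (List.append_inj this.symm (by simp)).1
  have hyv : zseg y (i' + w.length) v.length = v := by
    have := zseg_append y i' w.length v.length
    rw [hsegy] at this
    exact (List.append_inj this.symm (by simp)).2
  set s : ℤ := i + u.length - i' with hs
  set cut : ℤ := i + u.length + w.length with hcut
  set z : ℤ → A := fun j => if j < cut then x j else y (j - s) with hz
  have hzx : ∀ j : ℤ, j < cut → z j = x j := by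
    intro j hj; simp only [hz]; rw [if_pos hj]
  have agree : ∀ j : ℤ, i + u.length ≤ j → z j = y (j - s) := by
    intro j hj
    by_cases hc : j < cut
    · rw [hzx j hc]
      set t : ℕ := (j - i - u.length).toNat with ht
      have htw : t < w.length := by omega
      have h1 : x (i + u.length + t) = w.get ⟨t, htw⟩ := zseg_get_of_eq hxw t htw
      have h2 : y (i' + t) = w.get ⟨t, htw⟩ := zseg_get_of_eq hyw t htw
      rw [show j = i + u.length + t by omega, h1, show i + u.length + t - s = i' + t by omega, h2]
    · simp only [hz]; rw [if_neg hc]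
  have hzX : z ∈ X := by
    rw [hX]
    rintro f hf ⟨a, happf⟩
    have hsegf : zseg z a f.length = f := by
      apply List.ext_get (by simp)
      intro t h1 h2
      rw [zseg_get]
      exact happf ⟨t, h2⟩
    have hfM : f.length ≤ M := hMF f hf
    by_cases hcase : a + f.length ≤ cut
    · -- f appears in x
      have : zseg x a f.length = f :=
        (zseg_eq_of fun t htf => (hzx (a + t) (by omega)).symm).trans hsegf
      rw [hX] at hxX
      exact hxX f hf ⟨a, fun n => by
        have := zseg_get_of_eq this n.1 n.2
        simpa using this⟩
    · -- f appears in y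
      have ha : i + u.length ≤ a := by omega
      have : zseg y (a - s) f.length = f := by
        refine (zseg_eq_of fun t htf => ?_).trans hsegf
        rw [agree (a + t) (by omega)]
        congr 1
        omega
      rw [hX] at hyX
      exact hyX f hf ⟨a - s, fun n => by
        have := zseg_get_of_eq this n.1 n.2
        simpa using this⟩
  refine ⟨z, hzX, appears_iff.mpr ⟨i, ?_⟩⟩
  rw [List.length_append, List.length_append]
  rw [show u.length + (w.length + v.length) = (u.length + w.length) + v.length by ring]
  rw [zseg_append]
  have hleft : zseg z i (u.length + w.length) = u ++ w :=
    (zseg_eq_of fun t htf => hzx (i + t) (by omega)).trans hsegx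
  have hright : zseg z (i + (u.length + w.length)) v.length = v := by
    refine (zseg_eq_of fun t htf => ?_).trans hyv
    rw [agree (i + (u.length + w.length) + t) (by omega)]
    congr 1
    omega
  rw [hleft, show (((u.length + w.length : ℕ)) : ℤ) = (u.length : ℤ) + w.length by push_cast; ring,
    hright, List.append_assoc]

/-- If the shift of an essential presentation is M-step, it is an SFT. -/
theorem sft_of_mstep {G : LabeledGraph V A} [Fintype V] [Fintype A] (hess : G.Essential) {M : ℕ}
    (hM : MStep G.shift M) : IsSFT G.shift := by
  classical
  refine ⟨{f : List A | f.length = M + 1 ∧ f ∉ lang G.shift}, ?_, ?_⟩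
  · exact (List.finite_length_eq A (M + 1)).subset fun f hf => hf.1
  · ext x
    constructor
    · intro hx f hf happ
      exact hf.2 ⟨x, hx, happ⟩
    · intro hx
      have hA1 : ∀ i : ℤ, ∃ p q, G.Walk p (zseg x i (M + 1)) q := by
        intro i
        by_contra hcon
        refine hx (zseg x i (M + 1)) ⟨by simp, ?_⟩ ⟨i, fun n => ?_⟩
        · rw [mem_lang_shift hess]; exact hcon
        · have := zseg_get x i (M + 1) n.1 n.2
          simpa using this.symm
      have hB : ∀ (L : ℕ) (i : ℤ), ∃ p q, G.Walk p (zseg x i L) q := by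
        intro L
        induction L using Nat.strong_induction_on with
        | _ L ih =>
          intro i
          rcases le_or_gt L (M + 1) with hL | hL
          · obtain ⟨p, q, hpq⟩ := hA1 i
            rw [show M + 1 = L + (M + 1 - L) by omega, zseg_append] at hpq
            obtain ⟨r, h1, _⟩ := walk_append.mp hpq
            exact ⟨p, r, h1⟩
          · obtain ⟨K, hK⟩ : ∃ K, L = K + M + 1 := ⟨L - M - 1, by omega⟩
            subst hK
            have huw := ih (K + M) (by omega) i
            have hwb := hA1 (i + K)
            have hw' : zseg x (i + K) M ∈ lang G.shift :=
              (mem_lang_shift hess).mpr (ih M (by omega) (i + K))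
            have hsync := hM (zseg x (i + K) M) hw' (by simp)
            have h1 : zseg x i K ++ zseg x (i + K) M = zseg x i (K + M) :=
              (zseg_append x i K M).symm
            have h2 : zseg x (i + K) M ++ zseg x (i + K + M) 1 = zseg x (i + K) (M + 1) :=
              (zseg_append x (i + K) M 1).symm
            have hres := hsync.2 (zseg x i K) (zseg x (i + K + M) 1)
              (by rw [h1]; exact (mem_lang_shift hess).mpr huw)
              (by rw [h2]; exact (mem_lang_shift hess).mpr hwb)
            rw [h2, ← zseg_append, show K + (M + 1) = K + M + 1 by omega] at hres
            exact (mem_lang_shift hess).mp hres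
      letI : TopologicalSpace V := ⊥
      haveI : DiscreteTopology V := ⟨rfl⟩
      set C : ℕ → Set (ℤ → V) := fun k =>
        {v | ∀ j : ℤ, -(k : ℤ) ≤ j ∧ j ≤ (k : ℤ) → G.Edge (v j) (x j) (v (j + 1))} with hC
      have hCne : ∀ k, (C k).Nonempty := by
        intro k
        obtain ⟨p, q, hpq⟩ := hB (2 * k + 1) (-(k : ℤ))
        obtain ⟨uu, hu0, huL, hedge⟩ := walk_vertexSeq hpq
        refine ⟨fun j => uu (j + k).toNat, ?_⟩
        rintro j ⟨hj1, hj2⟩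
        have ht : (j + k).toNat < (zseg x (-(k : ℤ)) (2 * k + 1)).length := by
          rw [zseg_length]; omega
        have hED := hedge (j + k).toNat ht
        rw [zseg_get] at hED
        rw [show -(k : ℤ) + ((j + k).toNat : ℤ) = j by omega] at hED
        show G.Edge (uu (j + k).toNat) (x j) (uu ((j + 1) + k).toNat)
        rw [show ((j + 1) + k).toNat = (j + k).toNat + 1 by omega]
        exact hED
      have hCanti : ∀ k, C (k + 1) ⊆ C k := by
        intro k v hv j hj
        exact hv j ⟨by push_cast; omega, by push_cast; omega⟩
      have hCclosed : ∀ k, IsClosed (C k) := by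
        intro k
        have hrw : C k = ⋂ (j : ℤ), ⋂ (_ : -(k : ℤ) ≤ j ∧ j ≤ (k : ℤ)),
            ((fun v : ℤ → V => (v j, v (j + 1))) ⁻¹' {pq | G.Edge pq.1 (x j) pq.2}) := by
          ext v
          simp only [hC, Set.mem_setOf_eq, Set.mem_iInter, Set.mem_preimage]
        rw [hrw]
        exact isClosed_iInter fun j => isClosed_iInter fun _ =>
          IsClosed.preimage ((continuous_apply j).prodMk (continuous_apply (j + 1)))
            (isClosed_discrete _)
      have hne := IsCompact.nonempty_iInter_of_sequence_nonempty_isCompact_isClosed C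
        hCanti hCne ((hCclosed 0).isCompact) hCclosed
      obtain ⟨v, hv⟩ := hne
      refine ⟨v, fun j => ?_⟩
      exact Set.mem_iInter.mp hv j.natAbs j ⟨by omega, by omega⟩

end Stmt18Aux

/-- Let `G` be a deterministic presentation over a finite alphabet with `n`
vertices. Then `⟨G⟩` is a shift of finite type iff `⟨G⟩` is `2^(2n)`-step. -/

theorem stmt18 {V A : Type} [Fintype V] [Fintype A] (G : LabeledGraph V A)
    (hdet : G.Deterministic) (hess : G.Essential)
    (n : ℕ) (hn : n = Fintype.card V) :
    IsSFT G.shift ↔ MStep G.shift (2 ^ (2 * n)) := by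
  constructor
  · intro hsft
    obtain ⟨M, hM⟩ := Stmt18Aux.exists_mstep_of_sft hsft
    subst hn
    exact Stmt18Aux.pump hess M hM
  · intro hM
    exact Stmt18Aux.sft_of_mstep hess hM
end

section
/- For every integer k ≥ 0, the language ⋂_{i=0}^k L(M_{i,k}) is nonempty, and the minimum length of a word in ⋂_{i=0}^k L(M_{i,k}) is exactly 2^k. -/
/-- The common state set `{q_0, q_1, q*}` of the DFAs `M_{i,k}`. -/
inductive CState : Type
  | q0 : CState
  | q1 : CState
  | qstar : CState

/-- The transition function of `M_{i,k}` (with the input symbol `j` read as a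
natural number). For `i = 0`: `δ(q_0,j) = q_1` if `j = 0` and `q*` otherwise;
`δ(q_1,j) = q_1` if `j ≠ 0` and `q*` if `j = 0`. For `i ≥ 1`:
`δ(q_0,j) = q_0` if `j > i`, `q_1` if `j < i`, `q*` if `j = i`;
`δ(q_1,j) = q_0` if `j = i`, `q_1` if `j > i`, `q*` if `j < i`.
In all cases `δ(q*,j) = q*`. -/
def cstep (i : ℕ) : CState → ℕ → CState
  | .q0, j =>
      if i = 0 then (if j = 0 then .q1 else .qstar)
      else (if i < j then .q0 else if j < i then .q1 else .qstar)
  | .q1, j =>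
      if i = 0 then (if j = 0 then .qstar else .q1)
      else (if j = i then .q0 else if i < j then .q1 else .qstar)
  | .qstar, _ => .qstar

/-- The DFA `M_{i,k}` over the alphabet `{0, 1, …, k}`, with initial state
`q_0` and accepting set `{q_1}` if `i = 0` and `{q_0}` if `i ≥ 1`. -/
def Mik (i k : ℕ) : DFA' CState (Fin (k + 1)) where
  step := fun q a => cstep i q (a : ℕ)
  start := .q0
  accept := if i = 0 then {CState.q1} else {CState.q0}

namespace Stmt19Aux
open CState

/-- the witness word -/
def W : ℕ → List ℕ
  | 0 => [0]
  | (k+1) => (W k).flatMap (fun a => [a, k+1])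

lemma length_bind_pair (j : ℕ) : ∀ l : List ℕ, (l.flatMap fun a => [a, j]).length = 2 * l.length
  | [] => rfl
  | a :: l => by
      simp [List.flatMap_cons, length_bind_pair j l]; ring

lemma W_length (k : ℕ) : (W k).length = 2 ^ k := by
  induction k with
  | zero => rfl
  | succ k ih =>
      rw [show W (k+1) = (W k).flatMap (fun a => [a, k+1]) from rfl, length_bind_pair, ih,
        pow_succ]
      ring

lemma W_le (k : ℕ) : ∀ a ∈ W k, a ≤ k := by
  induction k with
  | zero => simp [W]
  | succ k ih =>
      intro a ha
      simp only [W, List.mem_flatMap] at ha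
      obtain ⟨b, hb, hab⟩ := ha
      simp at hab
      rcases hab with rfl | rfl
      · exact (ih a hb).trans (Nat.le_succ k)
      · exact le_rfl

lemma W_cons (k : ℕ) : ∃ t, W k = 0 :: t := by
  induction k with
  | zero => exact ⟨[], rfl⟩
  | succ k ih =>
      obtain ⟨t, ht⟩ := ih
      exact ⟨(k+1) :: t.flatMap (fun a => [a, k+1]), by simp [W, ht, List.flatMap_cons]⟩

lemma bind_id {i j : ℕ} (hq : ∀ q, cstep i q j = q) :
    ∀ (l : List ℕ) (q : CState),
      List.foldl (cstep i) q (l.flatMap fun a => [a, j]) = List.foldl (cstep i) q l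
  | [], _ => rfl
  | a :: l, q => by
      simp only [List.flatMap_cons, List.foldl_append, List.foldl_cons, List.foldl_nil, hq]
      exact bind_id hq l _

lemma cstep0_ne_q0 {q : CState} (hq : q ≠ q0) (a : ℕ) : cstep 0 q a ≠ q0 := by
  cases q with
  | q0 => exact absurd rfl hq
  | q1 => by_cases h : a = 0 <;> simp [cstep, h]
  | qstar => simp [cstep]

lemma bind0 {j : ℕ} (hj : j ≠ 0) :
    ∀ (l : List ℕ) (q : CState), q ≠ q0 →
      List.foldl (cstep 0) q (l.flatMap fun a => [a, j]) = List.foldl (cstep 0) q l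
  | [], _, _ => rfl
  | a :: l, q, hq => by
      have h1 : cstep 0 (cstep 0 q a) j = cstep 0 q a := by
        cases hc : cstep 0 q a with
        | q0 => exact absurd hc (cstep0_ne_q0 hq a)
        | q1 => simp [cstep, hj]
        | qstar => simp [cstep]
      simp only [List.flatMap_cons, List.foldl_append, List.foldl_cons, List.foldl_nil, h1]
      exact bind0 hj l _ (cstep0_ne_q0 hq a)

lemma bind_self {j : ℕ} (hj : j ≠ 0) :
    ∀ l : List ℕ, (∀ a ∈ l, a < j) → List.foldl (cstep j) q0 (l.flatMap fun a => [a, j]) = q0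
  | [], _ => rfl
  | a :: l, h => by
      have ha : a < j := h a (by simp)
      have e0 : cstep j q0 a = q1 := by
        simp [cstep, hj, Nat.lt_asymm ha, ha]
      have e1 : cstep j q1 j = q0 := by simp [cstep, hj]
      simp only [List.flatMap_cons, List.foldl_append, List.foldl_cons, List.foldl_nil, e0, e1]
      exact bind_self hj l (fun a ha => h a (by simp [ha]))

lemma W_eval : ∀ k, ∀ i ≤ k,
    List.foldl (cstep i) q0 (W k) = (if i = 0 then q1 else q0) := by
  intro k
  induction k with
  | zero =>
      intro i hi
      interval_cases i
      simp [W, cstep]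
  | succ k ih =>
      intro i hi
      rcases Nat.lt_succ_iff_lt_or_eq.mp (Nat.lt_succ_of_le hi) with h | rfl
      case inr =>
        have hj : (k+1) ≠ 0 := Nat.succ_ne_zero k
        rw [show W (k+1) = (W k).flatMap (fun a => [a, k+1]) from rfl,
          bind_self hj (W k) (fun a ha => Nat.lt_succ_of_le (W_le k a ha))]
        simp [hj]
      case inl =>
        have hik : i ≤ k := Nat.lt_succ_iff.mp h
        by_cases h0 : i = 0
        · subst h0
          obtain ⟨t, ht⟩ := W_cons k
          have hj : (k+1) ≠ 0 := Nat.succ_ne_zero k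
          have e0 : cstep 0 q0 0 = q1 := by simp [cstep]
          have e1 : cstep 0 q1 (k+1) = q1 := by simp [cstep, hj]
          have : List.foldl (cstep 0) q0 (W (k+1)) = List.foldl (cstep 0) q1 t := by
            simp only [W, ht, List.flatMap_cons, List.foldl_append, List.foldl_cons,
              List.foldl_nil, e0, e1]
            exact bind0 hj t q1 (fun h => nomatch h)
          rw [this]
          have h2 := ih 0 (Nat.zero_le k)
          rw [ht] at h2
          simpa [e0] using h2
        · have hq : ∀ q, cstep i q (k+1) = q := by
            intro q
            have h1 : i < k + 1 := Nat.lt_succ_of_le hik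
            have h2 : ¬ (k+1) < i := by omega
            have h3 : (k+1) ≠ i := by omega
            cases q <;> simp [cstep, h0, h1, h2, h3]
          rw [show W (k+1) = (W k).flatMap (fun a => [a, k+1]) from rfl, bind_id hq]
          simp only [ih i hik, h0, if_neg h0]

lemma foldl_qstar (i : ℕ) : ∀ l : List ℕ, List.foldl (cstep i) qstar l = qstar
  | [] => rfl
  | a :: l => by
      simpa [cstep] using foldl_qstar i (l := l)

lemma mem_of_eval0 : ∀ l : List ℕ, List.foldl (cstep 0) q0 l = q1 → 0 ∈ l
  | [], h => by cases h
  | a :: l, h => by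
      by_cases ha : a = 0
      · simp [ha]
      · exfalso
        have e : cstep 0 q0 a = qstar := by simp [cstep, ha]
        rw [List.foldl_cons, e, foldl_qstar] at h
        cases h

lemma countB {i : ℕ} (hi : i ≠ 0) : ∀ l : List ℕ,
    (List.foldl (cstep i) q0 l = q0 →
      l.countP (fun a => a = i) = l.countP (fun a => a < i)) ∧
    (List.foldl (cstep i) q0 l = q1 →
      l.countP (fun a => a < i) = l.countP (fun a => a = i) + 1) ∧
    (List.foldl (cstep i) q1 l = q0 →
      l.countP (fun a => a = i) = l.countP (fun a => a < i) + 1) ∧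
    (List.foldl (cstep i) q1 l = q1 →
      l.countP (fun a => a = i) = l.countP (fun a => a < i)) := by
  intro l
  induction l with
  | nil =>
      exact ⟨fun _ => rfl, fun h => CState.noConfusion h, fun h => CState.noConfusion h,
        fun _ => rfl⟩
  | cons a l ih =>
      obtain ⟨ih1, ih2, ih3, ih4⟩ := ih
      have hcN : (a :: l).countP (fun a => a = i)
          = l.countP (fun a => a = i) + (if a = i then 1 else 0) := by
        simp [List.countP_cons]
      have hcL : (a :: l).countP (fun a => a < i)
          = l.countP (fun a => a < i) + (if a < i then 1 else 0) := by
        simp [List.countP_cons]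
      rcases Nat.lt_trichotomy a i with h | h | h
      · have e0 : cstep i q0 a = q1 := by simp [cstep, hi, Nat.lt_asymm h, h]
        have e1 : cstep i q1 a = qstar := by
          simp [cstep, hi, Nat.ne_of_lt h, Nat.lt_asymm h]
        rw [hcN, hcL, if_neg (Nat.ne_of_lt h), if_pos h]
        refine ⟨?_, ?_, ?_, ?_⟩ <;> rw [List.foldl_cons]
        · rw [e0]; intro hh; have := ih3 hh; omega
        · rw [e0]; intro hh; have := ih4 hh; omega
        · rw [e1, foldl_qstar]; intro hh; exact CState.noConfusion hh
        · rw [e1, foldl_qstar]; intro hh; exact CState.noConfusion hh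
      · subst h
        have e0 : cstep a q0 a = qstar := by simp [cstep, hi]
        have e1 : cstep a q1 a = q0 := by simp [cstep, hi]
        rw [hcN, hcL, if_pos rfl, if_neg (lt_irrefl a)]
        refine ⟨?_, ?_, ?_, ?_⟩ <;> rw [List.foldl_cons]
        · rw [e0, foldl_qstar]; intro hh; exact CState.noConfusion hh
        · rw [e0, foldl_qstar]; intro hh; exact CState.noConfusion hh
        · rw [e1]; intro hh; have := ih1 hh; omega
        · rw [e1]; intro hh; have := ih2 hh; omega
      · have e0 : cstep i q0 a = q0 := by simp [cstep, hi, h]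
        have e1 : cstep i q1 a = q1 := by
          simp [cstep, hi, Nat.ne_of_gt h, h]
        rw [hcN, hcL, if_neg (Nat.ne_of_gt h), if_neg (Nat.lt_asymm h)]
        refine ⟨?_, ?_, ?_, ?_⟩ <;> rw [List.foldl_cons]
        · rw [e0]; intro hh; have := ih1 hh; omega
        · rw [e0]; intro hh; have := ih2 hh; omega
        · rw [e1]; intro hh; have := ih3 hh; omega
        · rw [e1]; intro hh; have := ih4 hh; omega

lemma countP_lt_succ (n : ℕ) : ∀ l : List ℕ,
    l.countP (fun a => a < n + 1) = l.countP (fun a => a < n) + l.countP (fun a => a = n)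
  | [] => rfl
  | a :: l => by
      have := countP_lt_succ n l
      simp only [List.countP_cons, this]
      rcases Nat.lt_trichotomy a n with h | h | h <;>
        simp [h, Nat.ne_of_lt, Nat.ne_of_gt, Nat.lt_asymm, Nat.lt_succ_of_lt,
          Nat.lt_irrefl, Nat.le_of_lt, Nat.not_le_of_lt] <;> omega

lemma foldl_mod (i k : ℕ) : ∀ (l : List ℕ), (∀ a ∈ l, a ≤ k) → ∀ q,
    List.foldl (fun q a => cstep i q (a % (k+1))) q l = List.foldl (cstep i) q l
  | [], _, _ => rfl
  | a :: l, h, q => by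
      have ha : a % (k+1) = a := Nat.mod_eq_of_lt (Nat.lt_succ_of_le (h a (by simp)))
      simp only [List.foldl_cons, ha]
      exact foldl_mod i k l (fun a ha => h a (by simp [ha])) _

def goodWord (k : ℕ) : List (Fin (k+1)) :=
  (W k).map (fun a => ⟨a % (k+1), Nat.mod_lt a (Nat.succ_pos k)⟩)

lemma goodWord_length (k : ℕ) : (goodWord k).length = 2 ^ k := by
  simp [goodWord, W_length]

lemma goodWord_mem (k : ℕ) : goodWord k ∈ ⋂ i : Fin (k + 1), (Mik (i : ℕ) k).lang := by
  rw [Set.mem_iInter]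
  intro i
  have hik : (i : ℕ) ≤ k := Nat.lt_succ_iff.mp i.isLt
  show (Mik (i:ℕ) k).evalFrom (Mik (i:ℕ) k).start (goodWord k) ∈ (Mik (i:ℕ) k).accept
  have he : (Mik (i:ℕ) k).evalFrom (Mik (i:ℕ) k).start (goodWord k)
      = List.foldl (cstep (i:ℕ)) q0 (W k) := by
    simp only [Mik, DFA'.evalFrom, goodWord, List.foldl_map]
    exact foldl_mod (i:ℕ) k (W k) (W_le k) q0
  rw [he, W_eval k (i:ℕ) hik]
  by_cases h0 : (i:ℕ) = 0 <;> simp [Mik, h0]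

lemma lower (k : ℕ) (w : List (Fin (k+1)))
    (hw : w ∈ ⋂ i : Fin (k + 1), (Mik (i : ℕ) k).lang) : 2 ^ k ≤ w.length := by
  set wn : List ℕ := w.map Fin.val with hwn
  have heval : ∀ i : ℕ, i ≤ k →
      List.foldl (cstep i) q0 wn = (if i = 0 then q1 else q0) := by
    intro i hik
    have h := Set.mem_iInter.mp hw ⟨i, Nat.lt_succ_of_le hik⟩
    have h2 : List.foldl (cstep i) q0 wn ∈
        (if i = 0 then ({q1} : Set CState) else {q0}) := by
      simpa [DFA'.lang, DFA'.evalFrom, Mik, hwn, List.foldl_map] using h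
    by_cases h0 : i = 0 <;> simp [h0] at h2 ⊢ <;> exact h2
  have h0 : (0:ℕ) ∈ wn := mem_of_eval0 wn (by simpa using heval 0 (Nat.zero_le k))
  have hkey : ∀ i : ℕ, i ≠ 0 → i ≤ k →
      wn.countP (fun a => a = i) = wn.countP (fun a => a < i) := by
    intro i h1 h2
    exact (countB h1 wn).1 (by simpa [h1] using heval i h2)
  have hbase : 1 ≤ wn.countP (fun a => a = 0) := by
    have : 0 < wn.countP (fun a => a = 0) :=
      List.countP_pos_iff.mpr ⟨0, h0, by simp⟩
    omega
  have hstep : ∀ i : ℕ, i ≤ k → 2 ^ i ≤ wn.countP (fun a => a < i + 1) := by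
    intro i
    induction i with
    | zero =>
        intro _
        have hz : wn.countP (fun a => a < 0) = 0 := by
          rw [List.countP_eq_zero]
          intro a _
          simp
        rw [countP_lt_succ 0 wn]
        omega
    | succ i ih =>
        intro hik
        have h1 := ih (Nat.le_of_succ_le hik)
        have h2 := hkey (i+1) (Nat.succ_ne_zero i) hik
        rw [countP_lt_succ (i+1) wn, h2, pow_succ]
        omega
  have hall : wn.countP (fun a => a < k + 1) = wn.length := by
    rw [List.countP_eq_length]
    intro a ha
    rw [hwn] at ha
    simp only [List.mem_map] at ha
    obtain ⟨b, _, rfl⟩ := ha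
    simpa using b.isLt
  have hlen : wn.length = w.length := by rw [hwn, List.length_map]
  have := hstep k le_rfl
  omega

end Stmt19Aux


/-- For every `k ≥ 0`, the language `⋂_{i=0}^k L(M_{i,k})` is nonempty, and
the minimum length of a word in it is exactly `2^k`. -/
theorem stmt19 (k : ℕ) :
    (⋂ i : Fin (k + 1), (Mik (i : ℕ) k).lang).Nonempty ∧
      IsLeast { m : ℕ | ∃ w ∈ ⋂ i : Fin (k + 1), (Mik (i : ℕ) k).lang,
        w.length = m } (2 ^ k) := by
  refine ⟨⟨Stmt19Aux.goodWord k, Stmt19Aux.goodWord_mem k⟩,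
    ⟨Stmt19Aux.goodWord k, Stmt19Aux.goodWord_mem k, Stmt19Aux.goodWord_length k⟩, ?_⟩
  rintro m ⟨w, hw, rfl⟩
  exact Stmt19Aux.lower k w hw
end
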